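/- Deterministic bound on the sign pairing. Let φ∈Ψ. Then for every integer s with k₀−1 ≤ s ≤ m−1 and every T∈𝒮_V, |⟨sign(S_*), T⟩| ≤ √(φ(s))·‖T‖₂ + √((c+2)·φ(s+1)/λ_{s+1})·‖W^{1/2}T‖₂. -/

import Mathlib

open Matrix
open scoped BigOperators

noncomputable section

variable {m : ℕ}

/-- Hilbert–Schmidt inner product of matrices -/
def hsInner (A B : Matrix (Fin m) (Fin m) ℝ) : ℝ := ∑ i, ∑ j, A i j * B i j

/-- Hilbert–Schmidt (Frobenius) norm -/
def hsNorm (A : Matrix (Fin m) (Fin m) ℝ) : ℝ := Real.sqrt (hsInner A A)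

/-- squared norm of the orthogonal projection of `x` onto `L` -/
def projNormSq (L : Submodule ℝ (EuclideanSpace ℝ (Fin m)))
    (x : EuclideanSpace ℝ (Fin m)) : ℝ :=
  ‖(L.orthogonalProjectionOnto x : EuclideanSpace ℝ (Fin m))‖ ^ 2

/-- the rank-one matrix `x ⊗ x` -/
def outerSelf (x : EuclideanSpace ℝ (Fin m)) : Matrix (Fin m) (Fin m) ℝ :=
  Matrix.vecMulVec (WithLp.equiv 2 (Fin m → ℝ) x) (WithLp.equiv 2 (Fin m → ℝ) x)

/-- `sign(S) = ∑_j sign(σ_j) ψ_j ⊗ ψ_j` for a symmetric matrix `S` with spectral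
decomposition `S = ∑_j σ_j ψ_j ⊗ ψ_j` -/
def signMatrix {A : Matrix (Fin m) (Fin m) ℝ} (hA : A.IsHermitian) :
    Matrix (Fin m) (Fin m) ℝ :=
  ∑ i, Real.sign (hA.eigenvalues i) • outerSelf (hA.eigenvectorBasis i)

/-- support of a symmetric matrix: the span of the eigenvectors with nonzero eigenvalues,
i.e. the range of the associated linear map -/
def suppS (A : Matrix (Fin m) (Fin m) ℝ) : Submodule ℝ (EuclideanSpace ℝ (Fin m)) :=
  LinearMap.range (Matrix.toEuclideanLin A)

/-- The positive semidefinite square root of a positive semidefinite matrix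
(the definition Mathlib had as `Matrix.PosSemidef.sqrt`, since removed) -/
def Matrix.PosSemidef.sqrt {A : Matrix (Fin m) (Fin m) ℝ} (hA : A.PosSemidef) :
    Matrix (Fin m) (Fin m) ℝ :=
  hA.1.eigenvectorUnitary.1 * diagonal ((↑) ∘ Real.sqrt ∘ hA.1.eigenvalues) *
    (star hA.1.eigenvectorUnitary : Matrix (Fin m) (Fin m) ℝ)

lemma psd_sqrt_conjTranspose {A : Matrix (Fin m) (Fin m) ℝ} (hA : A.PosSemidef) :
    (hA.sqrt)ᴴ = hA.sqrt := by
  unfold Matrix.PosSemidef.sqrt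
  rw [conjTranspose_mul, conjTranspose_mul, diagonal_conjTranspose]
  simp [Matrix.star_eq_conjTranspose, Matrix.mul_assoc]

lemma psd_sqrt_mul_self {A : Matrix (Fin m) (Fin m) ℝ} (hA : A.PosSemidef) :
    hA.sqrt * hA.sqrt = A := by
  have hU : (star hA.1.eigenvectorUnitary : Matrix (Fin m) (Fin m) ℝ) * hA.1.eigenvectorUnitary.1 = 1 :=
    Unitary.coe_star_mul_self _
  have hD : diagonal ((↑) ∘ Real.sqrt ∘ hA.1.eigenvalues) * diagonal ((↑) ∘ Real.sqrt ∘ hA.1.eigenvalues)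
      = diagonal ((↑) ∘ hA.1.eigenvalues : Fin m → ℝ) := by
    rw [diagonal_mul_diagonal]
    congr 1
    funext i
    simp [Real.mul_self_sqrt (hA.eigenvalues_nonneg i)]
  unfold Matrix.PosSemidef.sqrt
  calc _ = hA.1.eigenvectorUnitary.1 * (diagonal ((↑) ∘ Real.sqrt ∘ hA.1.eigenvalues) *
        ((star hA.1.eigenvectorUnitary : Matrix (Fin m) (Fin m) ℝ) * hA.1.eigenvectorUnitary.1) *
        diagonal ((↑) ∘ Real.sqrt ∘ hA.1.eigenvalues)) *
        (star hA.1.eigenvectorUnitary : Matrix (Fin m) (Fin m) ℝ) := by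
          simp only [Matrix.mul_assoc]
    _ = A := by
      rw [hU, Matrix.mul_one, hD]
      conv_rhs => rw [hA.1.spectral_theorem]
      rfl


open scoped RealInnerProductSpace

section Helpers

lemma tele_aux (e : ℕ → ℝ) : ∀ (b : ℕ) (a : ℕ), a ≤ b + 1 →
    ∑ j ∈ Finset.Icc a b, (e j - e (j+1)) = e a - e (b+1) := by
  intro b
  induction b with
  | zero =>
    intro a ha
    interval_cases a
    · simp
    · simp
  | succ n ih =>
    intro a ha
    rcases Nat.lt_or_ge a (n+2) with h | h
    · have h1 : a ≤ n + 1 := by omega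
      rw [Finset.sum_Icc_succ_top h1, ih a h1]
      ring
    · have : a = n + 2 := by omega
      subst this
      simp

lemma shift_Icc_sum (g : ℕ → ℝ) (a b : ℕ) :
    ∑ j ∈ Finset.Icc a b, g (j+1) = ∑ j ∈ Finset.Icc (a+1) (b+1), g j := by
  rw [← Finset.map_add_right_Icc a b 1, Finset.sum_map]
  rfl

lemma key_sum_bound (m : ℕ) (c : ℝ) (lam : ℕ → ℝ) (f p : ℕ → ℝ) (s : ℕ)
    (hsm : s + 1 ≤ m)
    (hlam_pos : ∀ k, s + 1 ≤ k → k ≤ m → 0 < lam k)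
    (hlam_mono : ∀ k, s + 1 ≤ k → k < m → lam k ≤ lam (k+1))
    (hsum : ∑ k ∈ Finset.Icc (s+1) m, (lam k)⁻¹ ≤ c * (s+1) / lam (s+1))
    (hp : ∀ k, 0 ≤ p k)
    (hP : ∀ k, k ≤ m → ∑ j ∈ Finset.Icc 1 k, p j ≤ f k)
    (hfj : ∀ j, s+1 ≤ j → j ≤ m → f j * ((s:ℝ)+1) ≤ f (s+1) * j) :
    ∑ k ∈ Finset.Icc (s+1) m, (lam k)⁻¹ * p k ≤ (c+1) * f (s+1) / lam (s+1) := by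
  set a := s + 1 with ha
  have ham : (m - 1) + 1 = m := by omega
  have hla : 0 < lam a := hlam_pos a le_rfl hsm
  have hfa_nonneg : 0 ≤ f a := by
    refine le_trans ?_ (hP a hsm)
    exact Finset.sum_nonneg fun j _ => hp j
  set q : ℝ := f a / a with hq
  have hq_nonneg : 0 ≤ q := div_nonneg hfa_nonneg (by positivity)
  have hfq : ∀ j, a ≤ j → j ≤ m → f j ≤ q * j := by
    intro j h1 h2
    have := hfj j h1 h2
    rw [hq, div_mul_eq_mul_div, le_div_iff₀ (by positivity)]
    push_cast
    rw [(by simp [ha] : ((a:ℕ):ℝ) = (s:ℝ)+1)]; nlinarith [this]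
  set d : ℕ → ℝ := fun j => (lam j)⁻¹ - (lam (j+1))⁻¹ with hd
  have hd_nonneg : ∀ j, a ≤ j → j ≤ m - 1 → 0 ≤ d j := by
    intro j h1 h2
    have h3 : j < m := by omega
    have := hlam_mono j h1 h3
    have hj : 0 < lam j := hlam_pos j h1 (by omega)
    have : (lam (j+1))⁻¹ ≤ (lam j)⁻¹ := by
      apply inv_anti₀ hj this
    simp [hd]; linarith
  have hinv : ∀ k ∈ Finset.Icc a m, (lam k)⁻¹ = (lam m)⁻¹ + ∑ j ∈ Finset.Icc k (m-1), d j := by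
    intro k hk
    simp only [Finset.mem_Icc] at hk
    rw [hd]
    rw [tele_aux (fun j => (lam j)⁻¹) (m-1) k (by omega)]
    rw [ham]
    ring
  have step2 : ∑ k ∈ Finset.Icc a m, (lam k)⁻¹ * p k
      = (∑ k ∈ Finset.Icc a m, (lam m)⁻¹ * p k)
        + ∑ k ∈ Finset.Icc a m, ∑ j ∈ Finset.Icc k (m-1), d j * p k := by
    rw [← Finset.sum_add_distrib]
    apply Finset.sum_congr rfl
    intro k hk
    rw [hinv k hk, ← Finset.sum_mul]
    ring
  have step3 : ∑ k ∈ Finset.Icc a m, ∑ j ∈ Finset.Icc k (m-1), d j * p k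
      = ∑ j ∈ Finset.Icc a (m-1), ∑ k ∈ Finset.Icc a j, d j * p k := by
    apply Finset.sum_comm'
    intro k j
    simp only [Finset.mem_Icc]
    omega
  have hsub : ∀ (u v : ℕ), 1 ≤ u → v ≤ m → ∑ k ∈ Finset.Icc u v, p k ≤ f v := by
    intro u v hu hv
    refine le_trans (Finset.sum_le_sum_of_subset_of_nonneg ?_ (fun i _ _ => hp i)) (hP v hv)
    exact Finset.Icc_subset_Icc_left hu
  have hb1 : ∑ k ∈ Finset.Icc a m, (lam m)⁻¹ * p k ≤ (lam m)⁻¹ * (q * m) := by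
    rw [← Finset.mul_sum]
    have h1 : ∑ k ∈ Finset.Icc a m, p k ≤ q * m :=
      le_trans (hsub a m (by omega) le_rfl) (hfq m hsm le_rfl)
    have h2 : 0 ≤ (lam m)⁻¹ := le_of_lt (inv_pos.mpr (hlam_pos m hsm le_rfl))
    exact mul_le_mul_of_nonneg_left h1 h2
  have hb2 : ∑ j ∈ Finset.Icc a (m-1), ∑ k ∈ Finset.Icc a j, d j * p k
      ≤ ∑ j ∈ Finset.Icc a (m-1), d j * (q * j) := by
    apply Finset.sum_le_sum
    intro j hj
    simp only [Finset.mem_Icc] at hj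
    rw [← Finset.mul_sum]
    have h1 : ∑ k ∈ Finset.Icc a j, p k ≤ q * j :=
      le_trans (hsub a j (by omega) (by omega)) (hfq j hj.1 (by omega))
    exact mul_le_mul_of_nonneg_left h1 (hd_nonneg j hj.1 hj.2)
  have hbr : ∑ j ∈ Finset.Icc a (m-1), d j * (q * j)
      = q * ((a * (lam a)⁻¹ - m * (lam m)⁻¹) + ∑ j ∈ Finset.Icc a (m-1), (lam (j+1))⁻¹) := by
    have e1 : ∀ j : ℕ, d j * (q * j) = q * (((j:ℝ) * (lam j)⁻¹ - ((j:ℝ)+1) * (lam (j+1))⁻¹) + (lam (j+1))⁻¹) := by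
      intro j
      simp only [hd]
      ring
    calc ∑ j ∈ Finset.Icc a (m-1), d j * (q * j)
        = ∑ j ∈ Finset.Icc a (m-1), (q * (((j:ℝ) * (lam j)⁻¹ - ((j:ℝ)+1) * (lam (j+1))⁻¹)) + q * (lam (j+1))⁻¹) := by
          apply Finset.sum_congr rfl
          intro j _
          rw [e1 j]; ring
      _ = q * (∑ j ∈ Finset.Icc a (m-1), ((j:ℝ) * (lam j)⁻¹ - ((j:ℝ)+1) * (lam (j+1))⁻¹))
            + q * ∑ j ∈ Finset.Icc a (m-1), (lam (j+1))⁻¹ := by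
          rw [Finset.sum_add_distrib, Finset.mul_sum, Finset.mul_sum]
      _ = q * ((a * (lam a)⁻¹ - m * (lam m)⁻¹) + ∑ j ∈ Finset.Icc a (m-1), (lam (j+1))⁻¹) := by
          have := tele_aux (fun j => (j:ℝ) * (lam j)⁻¹) (m-1) a (by omega)
          simp only [ham] at this
          push_cast at this ⊢
          rw [this]
          ring
  have hshift : ∑ j ∈ Finset.Icc a (m-1), (lam (j+1))⁻¹ ≤ ∑ k ∈ Finset.Icc a m, (lam k)⁻¹ := by
    rw [shift_Icc_sum (fun j => (lam j)⁻¹) a (m-1), ham]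
    apply Finset.sum_le_sum_of_subset_of_nonneg
    · exact Finset.Icc_subset_Icc_left (by omega)
    · intro i hi _
      simp only [Finset.mem_Icc] at hi
      exact le_of_lt (inv_pos.mpr (hlam_pos i hi.1 hi.2))
  have final : ∑ k ∈ Finset.Icc a m, (lam k)⁻¹ * p k
      ≤ (lam m)⁻¹ * (q * m) + q * ((a * (lam a)⁻¹ - m * (lam m)⁻¹) + c * a / lam a) := by
    rw [step2, step3]
    have h2 : ∑ j ∈ Finset.Icc a (m-1), d j * (q * j)
        ≤ q * ((a * (lam a)⁻¹ - m * (lam m)⁻¹) + c * a / lam a) := by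
      rw [hbr]
      apply mul_le_mul_of_nonneg_left _ hq_nonneg
      have : (a:ℝ) = ((s:ℝ)+1) := by simp [ha]
      apply add_le_add le_rfl
      exact le_trans hshift (by rw [this] at *; exact hsum)
    exact add_le_add hb1 (le_trans hb2 h2)
  refine le_trans final ?_
  have haR : (0:ℝ) < a := by positivity
  have hlaR : lam a ≠ 0 := ne_of_gt hla
  have haR' : (a:ℝ) ≠ 0 := ne_of_gt haR
  have heq : (lam m)⁻¹ * (q * m) + q * ((a:ℝ) * (lam a)⁻¹ - (m:ℝ) * (lam m)⁻¹ + c * a / lam a)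
      = (c+1) * f a / lam a := by
    have hqa : q * (a:ℝ) = f a := by
      rw [hq]; field_simp
    calc (lam m)⁻¹ * (q * m) + q * ((a:ℝ) * (lam a)⁻¹ - (m:ℝ) * (lam m)⁻¹ + c * a / lam a)
        = (q * (a:ℝ)) * ((lam a)⁻¹ * (1+c)) := by rw [div_eq_mul_inv]; ring
      _ = f a * ((lam a)⁻¹ * (1+c)) := by rw [hqa]
      _ = (c+1) * f a / lam a := by rw [div_eq_mul_inv]; ring
  rw [ha] at heq
  exact le_of_eq heq

variable {m : ℕ}

lemma hsInner_trace (A B : Matrix (Fin m) (Fin m) ℝ) : hsInner A B = (Aᴴ * B).trace := by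
  simp only [hsInner, Matrix.trace, Matrix.diag_apply, Matrix.mul_apply,
    Matrix.conjTranspose_apply, star_trivial]
  rw [Finset.sum_comm]

lemma inner_euc (x y : EuclideanSpace ℝ (Fin m)) : ⟪x, y⟫ = ∑ i, x i * y i := by
  simp [PiLp.inner_apply, RCLike.inner_apply, conj_trivial, mul_comm]

lemma inner_toEuclideanLin (A B : Matrix (Fin m) (Fin m) ℝ) (x y : EuclideanSpace ℝ (Fin m)) :
    ⟪Matrix.toEuclideanLin A x, Matrix.toEuclideanLin B y⟫ = ∑ i, (A *ᵥ x) i * (B *ᵥ y) i := by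
  rw [inner_euc]
  rfl

lemma toEuclideanLin_mul_apply (A B : Matrix (Fin m) (Fin m) ℝ) (x : EuclideanSpace ℝ (Fin m)) :
    Matrix.toEuclideanLin (A * B) x = Matrix.toEuclideanLin A (Matrix.toEuclideanLin B x) := by
  apply (WithLp.equiv 2 (Fin m → ℝ)).injective
  funext i
  show ((A * B) *ᵥ (x : Fin m → ℝ)) i = (A *ᵥ (B *ᵥ (x : Fin m → ℝ))) i
  rw [Matrix.mulVec_mulVec]

lemma key0 (v : Fin m → EuclideanSpace ℝ (Fin m)) (hv : Orthonormal ℝ v)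
    (A B : Matrix (Fin m) (Fin m) ℝ) :
    ∑ k, ⟪Matrix.toEuclideanLin A (v k), Matrix.toEuclideanLin B (v k)⟫ = hsInner A B := by
  classical
  set U : Matrix (Fin m) (Fin m) ℝ := Matrix.of (fun k i => v k i) with hU
  have hUUt : U * Uᵀ = 1 := by
    ext k l
    have := orthonormal_iff_ite.mp hv k l
    rw [inner_euc] at this
    simp only [Matrix.mul_apply, Matrix.transpose_apply, hU, Matrix.of_apply, Matrix.one_apply]
    rw [this]
  have hUtU : Uᵀ * U = 1 := mul_eq_one_comm.mp hUUt
  have step1 : ∀ k, ⟪Matrix.toEuclideanLin A (v k), Matrix.toEuclideanLin B (v k)⟫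
      = ∑ i, (A * Uᵀ) i k * (B * Uᵀ) i k := by
    intro k
    rw [inner_toEuclideanLin]
    apply Finset.sum_congr rfl
    intro i _
    simp [Matrix.mul_apply, Matrix.transpose_apply, Matrix.mulVec, dotProduct, hU]
  calc ∑ k, ⟪Matrix.toEuclideanLin A (v k), Matrix.toEuclideanLin B (v k)⟫
      = ∑ k, ∑ i, (A * Uᵀ) i k * (B * Uᵀ) i k := by
        exact Finset.sum_congr rfl fun k _ => step1 k
    _ = hsInner (A * Uᵀ) (B * Uᵀ) := by rw [hsInner]; exact Finset.sum_comm
    _ = ((A * Uᵀ)ᴴ * (B * Uᵀ)).trace := hsInner_trace _ _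
    _ = hsInner A B := by
        rw [hsInner_trace, Matrix.conjTranspose_mul]
        have hUH : Uᵀᴴ = U := by
          ext i j; simp [Matrix.conjTranspose_apply, star_trivial]
        rw [hUH]
        calc (U * Aᴴ * (B * Uᵀ)).trace
            = (U * (Aᴴ * B * Uᵀ)).trace := by noncomm_ring
          _ = ((Aᴴ * B * Uᵀ) * U).trace := Matrix.trace_mul_comm _ _
          _ = ((Aᴴ * B) * (Uᵀ * U)).trace := by rw [Matrix.mul_assoc]
          _ = (Aᴴ * B).trace := by rw [hUtU, Matrix.mul_one]

lemma outerSelf_apply (x y : EuclideanSpace ℝ (Fin m)) :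
    Matrix.toEuclideanLin (outerSelf x) y = ⟪x, y⟫ • x := by
  apply (WithLp.equiv 2 (Fin m → ℝ)).injective
  funext i
  show ((outerSelf x) *ᵥ (y : Fin m → ℝ)) i = (⟪x, y⟫ • x) i
  rw [inner_euc]
  simp only [outerSelf, Matrix.mulVec, dotProduct, Matrix.vecMulVec_apply,
    PiLp.smul_apply, smul_eq_mul, WithLp.equiv_apply]
  rw [Finset.sum_mul]
  apply Finset.sum_congr rfl
  intro j _
  ring

variable {A : Matrix (Fin m) (Fin m) ℝ} (hA : A.IsHermitian)

lemma eig_apply (i : Fin m) :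
    Matrix.toEuclideanLin A (hA.eigenvectorBasis i) = hA.eigenvalues i • hA.eigenvectorBasis i := by
  apply (WithLp.equiv 2 (Fin m → ℝ)).injective
  funext j
  exact congrFun (hA.mulVec_eigenvectorBasis i) j

lemma signMatrix_apply (x : EuclideanSpace ℝ (Fin m)) :
    Matrix.toEuclideanLin (signMatrix hA) x
      = ∑ i, (Real.sign (hA.eigenvalues i) * ⟪hA.eigenvectorBasis i, x⟫) • hA.eigenvectorBasis i := by
  rw [signMatrix, map_sum, LinearMap.sum_apply]
  apply Finset.sum_congr rfl
  intro i _
  rw [_root_.map_smul, LinearMap.smul_apply, outerSelf_apply, smul_smul]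

lemma sstar_apply (y : EuclideanSpace ℝ (Fin m)) :
    Matrix.toEuclideanLin A y = ∑ i, (hA.eigenvalues i * ⟪hA.eigenvectorBasis i, y⟫) • hA.eigenvectorBasis i := by
  conv_lhs => rw [← (hA.eigenvectorBasis).sum_repr' y]
  rw [map_sum]
  apply Finset.sum_congr rfl
  intro i _
  rw [_root_.map_smul, eig_apply hA i, smul_smul, mul_comm]

lemma inner_sum_smul (v : Fin m → EuclideanSpace ℝ (Fin m)) (hv : Orthonormal ℝ v)
    (c : Fin m → ℝ) (t : Finset (Fin m)) (j : Fin m) :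
    ⟪v j, ∑ i ∈ t, c i • v i⟫ = if j ∈ t then c j else 0 := by
  rw [inner_sum]
  simp_rw [real_inner_smul_right]
  have := orthonormal_iff_ite.mp hv
  calc ∑ i ∈ t, c i * ⟪v j, v i⟫ = ∑ i ∈ t, if j = i then c i else 0 := by
        apply Finset.sum_congr rfl
        intro i _
        rw [this j i]
        by_cases h : j = i <;> simp [h]
    _ = if j ∈ t then c j else 0 := by
        rw [Finset.sum_ite_eq]

lemma proj_repr (x : EuclideanSpace ℝ (Fin m)) :
    ((suppS A).orthogonalProjectionOnto x : EuclideanSpace ℝ (Fin m))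
      = ∑ i ∈ Finset.univ.filter (fun i => hA.eigenvalues i ≠ 0),
          ⟪hA.eigenvectorBasis i, x⟫ • hA.eigenvectorBasis i := by
  classical
  set ψ := hA.eigenvectorBasis with hψ
  set μ := hA.eigenvalues with hμ
  set J := Finset.univ.filter (fun i => μ i ≠ 0) with hJ
  have hvψ : Orthonormal ℝ (fun i => ψ i) := ψ.orthonormal
  rw [Submodule.coe_orthogonalProjectionOnto_apply]
  apply Submodule.eq_starProjection_of_mem_of_inner_eq_zero
  · refine ⟨∑ i ∈ J, ((μ i)⁻¹ * ⟪ψ i, x⟫) • ψ i, ?_⟩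
    rw [sstar_apply hA]
    have hcoef : ∀ j, μ j * ⟪ψ j, ∑ i ∈ J, ((μ i)⁻¹ * ⟪ψ i, x⟫) • ψ i⟫
        = if j ∈ J then ⟪ψ j, x⟫ else 0 := by
      intro j
      rw [inner_sum_smul (fun i => ψ i) hvψ _ J j]
      by_cases h : j ∈ J
      · simp only [h, if_true]
        have hμj : μ j ≠ 0 := by
          simp only [hJ, Finset.mem_filter] at h
          exact h.2
        field_simp
      · simp only [h, if_false, mul_zero]
    calc ∑ j, (μ j * ⟪ψ j, ∑ i ∈ J, ((μ i)⁻¹ * ⟪ψ i, x⟫) • ψ i⟫) • ψ j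
        = ∑ j, (if j ∈ J then ⟪ψ j, x⟫ else 0) • ψ j := by
          apply Finset.sum_congr rfl
          intro j _
          rw [hcoef j]
      _ = ∑ j ∈ J, ⟪ψ j, x⟫ • ψ j := by
          simp only [ite_smul, zero_smul]
          rw [Finset.sum_ite_mem, Finset.univ_inter]
  · intro w hw
    obtain ⟨u, rfl⟩ := hw
    rw [sstar_apply hA]
    rw [inner_sum]
    apply Finset.sum_eq_zero
    intro j _
    rw [real_inner_smul_right]
    by_cases h : μ j = 0
    · rw [show hA.eigenvalues j = (0:ℝ) from h]
      ring
    · have hjJ : j ∈ J := by simp [hJ, h]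
      have h1 : ⟪∑ i ∈ J, ⟪ψ i, x⟫ • ψ i, ψ j⟫ = ⟪ψ j, x⟫ := by
        rw [real_inner_comm]
        rw [inner_sum_smul (fun i => ψ i) hvψ _ J j]
        simp [hjJ]
      rw [inner_sub_left, h1, real_inner_comm x (ψ j)]
      ring

lemma proj_norm_sq (x : EuclideanSpace ℝ (Fin m)) :
    projNormSq (suppS A) x
      = ∑ i ∈ Finset.univ.filter (fun i => hA.eigenvalues i ≠ 0), ⟪hA.eigenvectorBasis i, x⟫^2 := by
  classical
  set ψ := hA.eigenvectorBasis with hψ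
  set J := Finset.univ.filter (fun i => hA.eigenvalues i ≠ 0) with hJ
  rw [projNormSq, ← real_inner_self_eq_norm_sq, proj_repr hA x]
  rw [sum_inner]
  apply Finset.sum_congr rfl
  intro i hi
  rw [real_inner_smul_left, inner_sum_smul (fun i => ψ i) ψ.orthonormal _ J i]
  split_ifs with h
  · ring
  · exact absurd (by simpa [hJ] using hi) h

lemma sign_inner_self (x : EuclideanSpace ℝ (Fin m)) :
    ⟪Matrix.toEuclideanLin (signMatrix hA) x, Matrix.toEuclideanLin (signMatrix hA) x⟫
      = projNormSq (suppS A) x := by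
  classical
  set ψ := hA.eigenvectorBasis with hψ
  set μ := hA.eigenvalues with hμ
  rw [proj_norm_sq hA x, signMatrix_apply hA x]
  rw [sum_inner]
  have h1 : ∀ j : Fin m,
      ⟪(Real.sign (μ j) * ⟪ψ j, x⟫) • ψ j,
        ∑ i, (Real.sign (μ i) * ⟪ψ i, x⟫) • ψ i⟫
      = (Real.sign (μ j))^2 * ⟪ψ j, x⟫^2 := by
    intro j
    rw [real_inner_smul_left, inner_sum_smul (fun i => ψ i) ψ.orthonormal _ Finset.univ j]
    simp only [Finset.mem_univ, if_true]
    ring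
  rw [Finset.sum_congr rfl (fun j _ => h1 j)]
  have h2 : ∀ j : Fin m, (Real.sign (μ j))^2 * ⟪ψ j, x⟫^2
      = if μ j ≠ 0 then ⟪ψ j, x⟫^2 else 0 := by
    intro j
    by_cases h : μ j = 0
    · simp [h, Real.sign_zero]
    · have : Real.sign (μ j) = -1 ∨ Real.sign (μ j) = 1 := by
        rcases Real.sign_apply_eq (μ j) with h1 | h1 | h1
        · left; exact h1
        · exact absurd (Real.sign_eq_zero_iff.mp h1) h
        · right; exact h1
      rcases this with h1 | h1 <;> simp [h, h1]
  rw [Finset.sum_congr rfl (fun j _ => h2 j), Finset.sum_ite, Finset.sum_const_zero, add_zero]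

lemma finsum_to_Icc (hm : 1 ≤ m) (g : ℕ → ℝ) (P : ℕ → Prop) [DecidablePred P] :
    ∑ k ∈ Finset.univ.filter (fun k : Fin m => P ((k:ℕ)+1)), g ((k:ℕ)+1)
      = ∑ j ∈ (Finset.Icc 1 m).filter P, g j := by
  rw [Finset.sum_filter, Finset.sum_filter]
  rw [Fin.sum_univ_eq_sum_range (fun i => if P (i+1) then g (i+1) else 0) m]
  have h1 : ∑ j ∈ Finset.Icc 1 m, (if P j then g j else 0)
      = ∑ j ∈ Finset.Icc 0 (m-1), (if P (j+1) then g (j+1) else 0) := by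
    rw [shift_Icc_sum (fun j => if P j then g j else 0) 0 (m-1)]
    have h2 : m - 1 + 1 = m := by omega
    rw [h2]
  rw [h1]
  congr 1
  rw [Finset.range_eq_Ico]
  ext j
  simp only [Finset.mem_Icc, Finset.mem_Ico]
  omega

lemma cs_sqrt {ι : Type*} (t : Finset ι) (a b : ι → ℝ)
    (ha : ∀ i ∈ t, 0 ≤ a i) (hb : ∀ i ∈ t, 0 ≤ b i) :
    ∑ i ∈ t, a i * b i ≤ Real.sqrt (∑ i ∈ t, a i ^ 2) * Real.sqrt (∑ i ∈ t, b i ^ 2) := by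
  have h := Finset.sum_mul_sq_le_sq_mul_sq t a b
  have h0 : 0 ≤ ∑ i ∈ t, a i * b i :=
    Finset.sum_nonneg fun i hi => mul_nonneg (ha i hi) (hb i hi)
  calc ∑ i ∈ t, a i * b i = Real.sqrt ((∑ i ∈ t, a i * b i)^2) := (Real.sqrt_sq h0).symm
    _ ≤ Real.sqrt ((∑ i ∈ t, a i ^ 2) * ∑ i ∈ t, b i ^ 2) := Real.sqrt_le_sqrt h
    _ = Real.sqrt (∑ i ∈ t, a i ^ 2) * Real.sqrt (∑ i ∈ t, b i ^ 2) :=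
        Real.sqrt_mul (Finset.sum_nonneg fun i _ => sq_nonneg _) _

lemma div_le_div_of_nonneg_right_aux {a b c : ℝ} (h : a ≤ b) (hc : 0 < c) : a / c ≤ b / c := by
  rw [div_eq_mul_inv, div_eq_mul_inv]
  exact mul_le_mul_of_nonneg_right h (le_of_lt (inv_pos.mpr hc))

end Helpers

/-- **Deterministic bound on the sign pairing.** Let `φ ∈ Ψ`. Then for every integer `s` with
`k₀−1 ≤ s ≤ m−1` and every symmetric `T`,
`|⟨sign(S_*), T⟩| ≤ √(φ(s)) ‖T‖₂ + √((c+2) φ(s+1)/λ_{s+1}) ‖W^{1/2}T‖₂`. -/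
theorem sign_pairing_bound
    (m : ℕ) (hm : 2 ≤ m) (c : ℝ) (hc : 0 < c)
    (lam : ℕ → ℝ) (k0 : ℕ)
    (hlam_nonneg : ∀ k, 1 ≤ k → k ≤ m → 0 ≤ lam k)
    (hlam_mono : ∀ k, 1 ≤ k → k < m → lam k ≤ lam (k + 1))
    (hk0_mem : 1 ≤ k0 ∧ k0 ≤ m) (hk0_pos : 0 < lam k0)
    (hk0_min : ∀ k, 1 ≤ k → k ≤ m → 0 < lam k → k0 ≤ k)
    (hratio : ∀ k, k0 ≤ k → k < m → ((k : ℝ) + 1) / lam (k + 1) ≤ (k : ℝ) / lam k)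
    (hgap : ∀ k, k0 ≤ k → k < m → lam (k + 1) ≤ c * lam k)
    (hsum : ∀ s, k0 ≤ s → s ≤ m → ∑ k ∈ Finset.Icc s m, (lam k)⁻¹ ≤ c * s / lam s)
    (phi : ℕ → EuclideanSpace ℝ (Fin m))
    (horth : Orthonormal ℝ (fun k : Fin m => phi ((k : ℕ) + 1)))
    (W : Matrix (Fin m) (Fin m) ℝ) (hW : W.PosSemidef)
    (hWeig : ∀ k, 1 ≤ k → k ≤ m → Matrix.toEuclideanLin W (phi k) = lam k • phi k)
    (Sstar : Matrix (Fin m) (Fin m) ℝ) (hSsym : Sstar.IsHermitian)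
    (r : ℕ) (hr : Sstar.rank = r) (hr1 : 1 ≤ r)
    (f : ℕ → ℝ)
    (hf_mono : ∀ k, k < m → f k ≤ f (k + 1))
    (hf_ratio : ∀ k, 1 ≤ k → k < m → f (k + 1) / ((k : ℝ) + 1) ≤ f k / k)
    (hf_dom : ∀ k, k ≤ m → ∑ j ∈ Finset.Icc 1 k, projNormSq (suppS Sstar) (phi j) ≤ f k)
    (s : ℕ) (hs_lb : k0 ≤ s + 1) (hs_ub : s + 1 ≤ m)
    (T : Matrix (Fin m) (Fin m) ℝ) (hT : T.IsHermitian) :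
    |hsInner (signMatrix hSsym) T| ≤
      Real.sqrt (f s) * hsNorm T +
        Real.sqrt ((c + 2) * f (s + 1) / lam (s + 1)) * hsNorm (hW.sqrt * T) := by
  classical
  -- abbreviations
  set v : Fin m → EuclideanSpace ℝ (Fin m) := fun k => phi ((k:ℕ)+1) with hv
  set S : Matrix (Fin m) (Fin m) ℝ := signMatrix hSsym with hS
  have hm1 : 1 ≤ m := by omega
  have hsm : s ≤ m := by omega
  -- positivity of lam on [k0, m]
  have hlam_pos : ∀ k, k0 ≤ k → k ≤ m → 0 < lam k := by
    intro k hk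
    induction k with
    | zero => intro h; exact absurd hk (by omega)
    | succ n ih =>
      intro hnm
      rcases Nat.lt_or_ge k0 (n+1) with h | h
      · have h1 : k0 ≤ n := by omega
        have h2 : 0 < lam n := ih h1 (by omega)
        have h3 : lam n ≤ lam (n+1) := hlam_mono n (by omega) (by omega)
        linarith
      · have : k0 = n + 1 := by omega
        rw [← this]; exact hk0_pos
  -- f-ratio chain
  have hfj : ∀ j, s+1 ≤ j → j ≤ m → f j * ((s:ℝ)+1) ≤ f (s+1) * j := by
    intro j hj
    induction j with
    | zero => intro h; exact absurd hj (by omega)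
    | succ n ih =>
      intro hnm
      rcases Nat.lt_or_ge (s+1) (n+1) with h | h
      · have h1 : s + 1 ≤ n := by omega
        have h2 := ih h1 (by omega)
        have h3 := hf_ratio n (by omega) (by omega)
        have hn0 : (0:ℝ) < (n:ℝ) := by
          have : 1 ≤ n := by omega
          exact_mod_cast Nat.lt_of_lt_of_le Nat.zero_lt_one this
        have h4 : f (n+1) * (n:ℝ) ≤ f n * ((n:ℝ)+1) := by
          rw [div_le_div_iff₀ (by positivity) hn0] at h3
          linarith
        have hs0 : (0:ℝ) ≤ (s:ℝ)+1 := by positivity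
        have h5 : f (n+1) * ((s:ℝ)+1) * (n:ℝ) ≤ f (s+1) * ((n:ℝ)+1) * (n:ℝ) := by
          nlinarith [h2, h4, hn0, hs0]
        have h6 := le_of_mul_le_mul_right h5 hn0
        push_cast
        linarith [h6]
      · have he : s + 1 = n + 1 := by omega
        rw [← he]
        push_cast
        exact le_of_eq (by ring)
  -- nonneg of f (s+1)
  have hp_nonneg : ∀ j : ℕ, 0 ≤ projNormSq (suppS Sstar) (phi j) := by
    intro j
    exact sq_nonneg _
  have hfs1_nonneg : 0 ≤ f (s+1) := by
    refine le_trans ?_ (hf_dom (s+1) hs_ub)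
    exact Finset.sum_nonneg fun j _ => hp_nonneg j
  have hlam_s1 : 0 < lam (s+1) := hlam_pos (s+1) hs_lb hs_ub
  -- the key bound on the tail sum
  have hkey : ∑ j ∈ Finset.Icc (s+1) m, (lam j)⁻¹ * projNormSq (suppS Sstar) (phi j)
      ≤ (c+1) * f (s+1) / lam (s+1) := by
    apply key_sum_bound m c lam f (fun j => projNormSq (suppS Sstar) (phi j)) s hs_ub
    · intro k h1 h2; exact hlam_pos k (by omega) h2
    · intro k h1 h2; exact hlam_mono k (by omega) h2
    · have := hsum (s+1) hs_lb hs_ub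
      push_cast at this ⊢
      exact this
    · exact hp_nonneg
    · exact hf_dom
    · exact hfj
  -- split the pairing
  have hsplit : hsInner S T = ∑ k : Fin m, ⟪Matrix.toEuclideanLin S (v k), Matrix.toEuclideanLin T (v k)⟫ :=
    (key0 v horth S T).symm
  set F : Fin m → ℝ := fun k => ⟪Matrix.toEuclideanLin S (v k), Matrix.toEuclideanLin T (v k)⟫ with hF
  set P1 : Fin m → Prop := fun k => (k:ℕ)+1 ≤ s with hP1
  have hsplit2 : hsInner S T
      = (∑ k ∈ Finset.univ.filter P1, F k) + ∑ k ∈ Finset.univ.filter (fun k => ¬ P1 k), F k := by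
    rw [hsplit, ← Finset.sum_filter_add_sum_filter_not Finset.univ P1 F]
  -- norms of S-images equal projections
  have hSnorm : ∀ x : EuclideanSpace ℝ (Fin m),
      ‖Matrix.toEuclideanLin S x‖^2 = projNormSq (suppS Sstar) x := by
    intro x
    rw [← real_inner_self_eq_norm_sq]
    exact sign_inner_self hSsym x
  -- Cauchy–Schwarz on the first part
  have habs1 : |∑ k ∈ Finset.univ.filter P1, F k|
      ≤ ∑ k ∈ Finset.univ.filter P1,
          ‖Matrix.toEuclideanLin S (v k)‖ * ‖Matrix.toEuclideanLin T (v k)‖ := by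
    refine le_trans (Finset.abs_sum_le_sum_abs _ _) (Finset.sum_le_sum ?_)
    intro k _
    exact abs_real_inner_le_norm _ _
  have hcs1 : ∑ k ∈ Finset.univ.filter P1,
        ‖Matrix.toEuclideanLin S (v k)‖ * ‖Matrix.toEuclideanLin T (v k)‖
      ≤ Real.sqrt (∑ k ∈ Finset.univ.filter P1, ‖Matrix.toEuclideanLin S (v k)‖^2)
        * Real.sqrt (∑ k ∈ Finset.univ.filter P1, ‖Matrix.toEuclideanLin T (v k)‖^2) :=
    cs_sqrt _ _ _ (fun i _ => norm_nonneg _) (fun i _ => norm_nonneg _)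
  have hsum1a : ∑ k ∈ Finset.univ.filter P1, ‖Matrix.toEuclideanLin S (v k)‖^2 ≤ f s := by
    have : ∑ k ∈ Finset.univ.filter P1, ‖Matrix.toEuclideanLin S (v k)‖^2
        = ∑ k ∈ Finset.univ.filter P1, projNormSq (suppS Sstar) (phi ((k:ℕ)+1)) := by
      apply Finset.sum_congr rfl
      intro k _
      exact hSnorm (v k)
    rw [this]
    rw [finsum_to_Icc hm1 (fun j => projNormSq (suppS Sstar) (phi j)) (fun j => j ≤ s)]
    have hfil : (Finset.Icc 1 m).filter (fun j => j ≤ s) = Finset.Icc 1 s := by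
      ext j
      simp only [Finset.mem_filter, Finset.mem_Icc]
      omega
    rw [hfil]
    exact hf_dom s hsm
  have hsum1b : ∑ k ∈ Finset.univ.filter P1, ‖Matrix.toEuclideanLin T (v k)‖^2 ≤ hsInner T T := by
    have h1 : ∑ k : Fin m, ‖Matrix.toEuclideanLin T (v k)‖^2 = hsInner T T := by
      rw [← key0 v horth T T]
      apply Finset.sum_congr rfl
      intro k _
      rw [real_inner_self_eq_norm_sq]
    rw [← h1]
    apply Finset.sum_le_sum_of_subset_of_nonneg (Finset.filter_subset _ _)
    intro i _ _
    exact sq_nonneg _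
  have hbound1 : |∑ k ∈ Finset.univ.filter P1, F k| ≤ Real.sqrt (f s) * hsNorm T := by
    refine le_trans habs1 (le_trans hcs1 ?_)
    apply mul_le_mul
    · exact Real.sqrt_le_sqrt hsum1a
    · rw [hsNorm]; exact Real.sqrt_le_sqrt hsum1b
    · exact Real.sqrt_nonneg _
    · exact Real.sqrt_nonneg _
  -- second part
  set lv : Fin m → ℝ := fun k => lam ((k:ℕ)+1) with hlv
  have hlv_pos : ∀ k : Fin m, ¬ P1 k → 0 < lv k := by
    intro k hk
    have h1 : s + 1 ≤ (k:ℕ)+1 := by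
      simp only [hP1] at hk
      omega
    exact hlam_pos ((k:ℕ)+1) (by omega) (by omega)
  have habs2 : |∑ k ∈ Finset.univ.filter (fun k => ¬ P1 k), F k|
      ≤ ∑ k ∈ Finset.univ.filter (fun k => ¬ P1 k),
          (‖Matrix.toEuclideanLin S (v k)‖ / Real.sqrt (lv k))
            * (Real.sqrt (lv k) * ‖Matrix.toEuclideanLin T (v k)‖) := by
    refine le_trans (Finset.abs_sum_le_sum_abs _ _) (Finset.sum_le_sum ?_)
    intro k hk
    simp only [Finset.mem_filter] at hk
    have hpos := hlv_pos k hk.2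
    have hsq : Real.sqrt (lv k) > 0 := Real.sqrt_pos.mpr hpos
    have : ‖Matrix.toEuclideanLin S (v k)‖ / Real.sqrt (lv k) * (Real.sqrt (lv k) * ‖Matrix.toEuclideanLin T (v k)‖)
        = ‖Matrix.toEuclideanLin S (v k)‖ * ‖Matrix.toEuclideanLin T (v k)‖ := by
      field_simp
    rw [this]
    exact abs_real_inner_le_norm _ _
  have hcs2 : ∑ k ∈ Finset.univ.filter (fun k => ¬ P1 k),
        (‖Matrix.toEuclideanLin S (v k)‖ / Real.sqrt (lv k))
          * (Real.sqrt (lv k) * ‖Matrix.toEuclideanLin T (v k)‖)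
      ≤ Real.sqrt (∑ k ∈ Finset.univ.filter (fun k => ¬ P1 k),
            (‖Matrix.toEuclideanLin S (v k)‖ / Real.sqrt (lv k))^2)
        * Real.sqrt (∑ k ∈ Finset.univ.filter (fun k => ¬ P1 k),
            (Real.sqrt (lv k) * ‖Matrix.toEuclideanLin T (v k)‖)^2) := by
    apply cs_sqrt
    · intro i _
      positivity
    · intro i _
      positivity
  have hsum2a : ∑ k ∈ Finset.univ.filter (fun k => ¬ P1 k),
        (‖Matrix.toEuclideanLin S (v k)‖ / Real.sqrt (lv k))^2
      ≤ (c+1) * f (s+1) / lam (s+1) := by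
    have hcong : ∀ k ∈ Finset.univ.filter (fun k => ¬ P1 k),
        (‖Matrix.toEuclideanLin S (v k)‖ / Real.sqrt (lv k))^2
          = (lam ((k:ℕ)+1))⁻¹ * projNormSq (suppS Sstar) (phi ((k:ℕ)+1)) := by
      intro k hk
      simp only [Finset.mem_filter] at hk
      have hpos := hlv_pos k hk.2
      rw [div_pow, Real.sq_sqrt (le_of_lt hpos), hSnorm (v k)]
      rw [div_eq_inv_mul]
    rw [Finset.sum_congr rfl hcong]
    have := finsum_to_Icc hm1
      (fun j => (lam j)⁻¹ * projNormSq (suppS Sstar) (phi j)) (fun j => ¬ (j ≤ s))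
    rw [this]
    have hfil : (Finset.Icc 1 m).filter (fun j => ¬ (j ≤ s)) = Finset.Icc (s+1) m := by
      ext j
      simp only [Finset.mem_filter, Finset.mem_Icc]
      omega
    rw [hfil]
    exact hkey
  -- the weighted T-sum equals the HS norm of sqrt W * T
  have hWact : ∀ k : Fin m, Matrix.toEuclideanLin W (v k) = lv k • v k := by
    intro k
    exact hWeig ((k:ℕ)+1) (by omega) (by omega)
  have hsum2b : ∑ k ∈ Finset.univ.filter (fun k => ¬ P1 k),
        (Real.sqrt (lv k) * ‖Matrix.toEuclideanLin T (v k)‖)^2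
      ≤ hsInner (hW.sqrt * T) (hW.sqrt * T) := by
    have hlv_nonneg : ∀ k : Fin m, 0 ≤ lv k := by
      intro k
      exact hlam_nonneg ((k:ℕ)+1) (by omega) (by omega)
    have hterm : ∀ k : Fin m, (Real.sqrt (lv k) * ‖Matrix.toEuclideanLin T (v k)‖)^2
        = ⟪Matrix.toEuclideanLin (T * W) (v k), Matrix.toEuclideanLin T (v k)⟫ := by
      intro k
      rw [toEuclideanLin_mul_apply, hWact k, _root_.map_smul, real_inner_smul_left]
      rw [real_inner_self_eq_norm_sq]
      rw [mul_pow, Real.sq_sqrt (hlv_nonneg k)]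
    have hfull : ∑ k : Fin m, (Real.sqrt (lv k) * ‖Matrix.toEuclideanLin T (v k)‖)^2
        = hsInner (T * W) T := by
      rw [Finset.sum_congr rfl (fun k _ => hterm k)]
      exact key0 v horth (T * W) T
    have hsubset : ∑ k ∈ Finset.univ.filter (fun k => ¬ P1 k),
          (Real.sqrt (lv k) * ‖Matrix.toEuclideanLin T (v k)‖)^2
        ≤ ∑ k : Fin m, (Real.sqrt (lv k) * ‖Matrix.toEuclideanLin T (v k)‖)^2 := by
      apply Finset.sum_le_sum_of_subset_of_nonneg (Finset.filter_subset _ _)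
      intro i _ _
      exact sq_nonneg _
    refine le_trans hsubset (le_of_eq ?_)
    rw [hfull]
    -- matrix identity: hsInner (T*W) T = hsInner (√W T) (√W T)
    have hTH : Tᴴ = T := hT
    have hWH : Wᴴ = W := hW.1
    have hRH : (hW.sqrt)ᴴ = hW.sqrt := psd_sqrt_conjTranspose hW
    rw [hsInner_trace, hsInner_trace]
    rw [Matrix.conjTranspose_mul, hTH, hWH, Matrix.conjTranspose_mul, hTH, hRH]
    calc (W * T * T).trace
        = (W * (T * T)).trace := by rw [Matrix.mul_assoc]
      _ = ((hW.sqrt * hW.sqrt) * (T * T)).trace := by rw [psd_sqrt_mul_self hW]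
      _ = ((hW.sqrt * (hW.sqrt * T)) * T).trace := by noncomm_ring
      _ = (T * (hW.sqrt * (hW.sqrt * T))).trace := (Matrix.trace_mul_comm _ _).symm
      _ = (T * hW.sqrt * (hW.sqrt * T)).trace := by rw [Matrix.mul_assoc]
  have hbound2 : |∑ k ∈ Finset.univ.filter (fun k => ¬ P1 k), F k|
      ≤ Real.sqrt ((c+2) * f (s+1) / lam (s+1)) * hsNorm (hW.sqrt * T) := by
    refine le_trans habs2 (le_trans hcs2 ?_)
    apply mul_le_mul
    · apply Real.sqrt_le_sqrt
      refine le_trans hsum2a ?_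
      have h9 : (c+1) * f (s+1) ≤ (c+2) * f (s+1) := by nlinarith [hfs1_nonneg]
      exact div_le_div_of_nonneg_right_aux h9 hlam_s1
    · rw [hsNorm]
      exact Real.sqrt_le_sqrt hsum2b
    · exact Real.sqrt_nonneg _
    · exact Real.sqrt_nonneg _
  calc |hsInner (signMatrix hSsym) T|
      = |(∑ k ∈ Finset.univ.filter P1, F k) + ∑ k ∈ Finset.univ.filter (fun k => ¬ P1 k), F k| := by
        rw [← hsplit2, hS]
    _ ≤ |∑ k ∈ Finset.univ.filter P1, F k| + |∑ k ∈ Finset.univ.filter (fun k => ¬ P1 k), F k| :=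
        abs_add_le _ _
    _ ≤ Real.sqrt (f s) * hsNorm T + Real.sqrt ((c + 2) * f (s + 1) / lam (s + 1)) * hsNorm (hW.sqrt * T) :=
        add_le_add hbound1 hbound2

end
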